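/- Let γ, β, τ ∈ [0, 1/2] and let u, v ∈ ℝ^n satisfy |‖u‖_2^2 − ‖v‖_2^2| ≤ β‖v‖_2^2, ‖u − v‖_2^2 ≤ γ‖v‖_2^2, and ‖v‖_4^4 ≥ (1−τ)‖v‖_2^4. Then ‖u‖_4^4 ≥ (1 − τ − C(√γ + β))·‖u‖_2^4 for an absolute constant C. -/
import Mathlib

open scoped BigOperators

set_option maxHeartbeats 1600000 in
theorem stmt_12 :
    ∃ C : ℝ, 0 < C ∧
      ∀ (n : ℕ) (γ β τ : ℝ), γ ∈ Set.Icc (0 : ℝ) (1 / 2) → β ∈ Set.Icc (0 : ℝ) (1 / 2) →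
        τ ∈ Set.Icc (0 : ℝ) (1 / 2) →
        ∀ u v : Fin n → ℝ,
          |(∑ i, u i ^ 2) - ∑ i, v i ^ 2| ≤ β * ∑ i, v i ^ 2 →
          (∑ i, (u i - v i) ^ 2) ≤ γ * ∑ i, v i ^ 2 →
          (∑ i, v i ^ 4) ≥ (1 - τ) * (∑ i, v i ^ 2) ^ 2 →
          (∑ i, u i ^ 4) ≥ (1 - τ - C * (Real.sqrt γ + β)) * (∑ i, u i ^ 2) ^ 2 := by
  refine ⟨15, by norm_num, ?_⟩
  intro n γ β τ hγ hβ hτ u v hβb hγb hv4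
  obtain ⟨hγ0, hγ1⟩ := hγ
  obtain ⟨hβ0, hβ1⟩ := hβ
  obtain ⟨hτ0, hτ1⟩ := hτ
  set S : ℝ := ∑ i, v i ^ 2 with hSdef
  set T : ℝ := ∑ i, u i ^ 2 with hTdef
  clear_value S T
  have hS : 0 ≤ S := hSdef ▸ Finset.sum_nonneg fun i _ => sq_nonneg (v i)
  have hT : 0 ≤ T := hTdef ▸ Finset.sum_nonneg fun i _ => sq_nonneg (u i)
  have hu4 : (0:ℝ) ≤ ∑ i, u i ^ 4 := Finset.sum_nonneg fun i _ => by positivity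
  obtain ⟨hTlo, hThi⟩ := abs_le.mp hβb
  have hsg : 0 ≤ Real.sqrt γ := Real.sqrt_nonneg γ
  have hsg2 : Real.sqrt γ ^ 2 = γ := Real.sq_sqrt hγ0
  set D : ℝ := ∑ i, |u i ^ 2 - v i ^ 2| with hDdef
  clear_value D
  have hD0 : 0 ≤ D := hDdef ▸ Finset.sum_nonneg fun i _ => abs_nonneg _
  -- sum (u+v)^2 ≤ 2T + 2S
  have hsum2 : (∑ i, (u i + v i) ^ 2) ≤ 2 * T + 2 * S := by
    have : (∑ i, (u i + v i) ^ 2) ≤ ∑ i, (2 * u i ^ 2 + 2 * v i ^ 2) := by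
      refine Finset.sum_le_sum fun i _ => ?_
      nlinarith [sq_nonneg (u i - v i)]
    calc (∑ i, (u i + v i) ^ 2) ≤ ∑ i, (2 * u i ^ 2 + 2 * v i ^ 2) := this
      _ = 2 * T + 2 * S := by
          rw [Finset.sum_add_distrib, ← Finset.mul_sum, ← Finset.mul_sum, hSdef, hTdef]
  have hsum2' : (∑ i, (u i + v i) ^ 2) ≤ 5 * S := by nlinarith
  have hsum2nn : (0:ℝ) ≤ ∑ i, (u i + v i) ^ 2 :=
    Finset.sum_nonneg fun i _ => sq_nonneg _
  -- Cauchy-Schwarz : D^2 ≤ (γ S)(5 S)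
  have hCS : D ^ 2 ≤ (∑ i, (u i - v i) ^ 2) * ∑ i, (u i + v i) ^ 2 := by
    rw [hDdef]
    have := Finset.sum_mul_sq_le_sq_mul_sq Finset.univ
      (fun i => |u i - v i|) (fun i => |u i + v i|)
    simpa [← abs_mul, sq_abs, show ∀ i, (u i - v i) * (u i + v i) = u i ^ 2 - v i ^ 2
      from fun i => by ring] using this
  have hD2 : D ^ 2 ≤ 5 * γ * S ^ 2 := by
    calc D ^ 2 ≤ (∑ i, (u i - v i) ^ 2) * ∑ i, (u i + v i) ^ 2 := hCS
      _ ≤ (γ * S) * (5 * S) := by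
          apply mul_le_mul hγb hsum2' hsum2nn
          positivity
      _ = 5 * γ * S ^ 2 := by ring
  have hD : D ≤ 3 * Real.sqrt γ * S := by
    nlinarith [mul_nonneg (mul_nonneg (by norm_num : (0:ℝ) ≤ 3) hsg) hS,
      sq_nonneg (D - 3 * Real.sqrt γ * S)]
  -- fourth power comparison
  have h46 : (∑ i, v i ^ 4) - (∑ i, u i ^ 4) ≤ (T + S) * D := by
    have key : ∀ i, v i ^ 4 - u i ^ 4 ≤ (T + S) * |u i ^ 2 - v i ^ 2| := by
      intro i
      have hui : u i ^ 2 ≤ T := by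
        rw [hTdef]
        exact Finset.single_le_sum (f := fun j => u j ^ 2)
          (fun j _ => sq_nonneg (u j)) (Finset.mem_univ i)
      have hvi : v i ^ 2 ≤ S := by
        rw [hSdef]
        exact Finset.single_le_sum (f := fun j => v j ^ 2)
          (fun j _ => sq_nonneg (v j)) (Finset.mem_univ i)
      have aux : ∀ a b A B : ℝ, 0 ≤ a → 0 ≤ b → a ≤ A → b ≤ B →
          b ^ 2 - a ^ 2 ≤ (A + B) * |a - b| := by
        intro a b A B ha hb hA hB
        rcases abs_cases (a - b) with ⟨h1, h2⟩ | ⟨h1, h2⟩ <;> nlinarith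
      have := aux (u i ^ 2) (v i ^ 2) T S (sq_nonneg _) (sq_nonneg _) hui hvi
      nlinarith [this]
    calc (∑ i, v i ^ 4) - (∑ i, u i ^ 4) = ∑ i, (v i ^ 4 - u i ^ 4) := by
          rw [Finset.sum_sub_distrib]
      _ ≤ ∑ i, (T + S) * |u i ^ 2 - v i ^ 2| := Finset.sum_le_sum fun i _ => key i
      _ = (T + S) * D := by rw [← Finset.mul_sum, hDdef]
  -- main bound: sum u^4 ≥ (1 - τ - 7.5 √γ) S^2
  have hmain : (∑ i, u i ^ 4) ≥ (1 - τ) * S ^ 2 - (15/2) * Real.sqrt γ * S ^ 2 := by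
    have hTS : (T + S) * D ≤ (5/2 * S) * (3 * Real.sqrt γ * S) := by
      apply mul_le_mul (by nlinarith) hD hD0 (by positivity)
    nlinarith
  by_cases hA : 1 - τ - (15/2) * Real.sqrt γ < 0
  · -- coefficient on RHS is nonpositive
    have hcoef : 1 - τ - 15 * (Real.sqrt γ + β) ≤ 0 := by nlinarith
    have : (1 - τ - 15 * (Real.sqrt γ + β)) * T ^ 2 ≤ 0 :=
      mul_nonpos_of_nonpos_of_nonneg hcoef (sq_nonneg T)
    linarith
  · push_neg at hA
    by_cases hB : 1 - τ - 15 * (Real.sqrt γ + β) ≤ 0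
    · have : (1 - τ - 15 * (Real.sqrt γ + β)) * T ^ 2 ≤ 0 :=
        mul_nonpos_of_nonpos_of_nonneg hB (sq_nonneg T)
      have hAS : (0:ℝ) ≤ (1 - τ - (15/2) * Real.sqrt γ) * S ^ 2 :=
        mul_nonneg hA (sq_nonneg S)
      linarith
    · push_neg at hB
      have hT2 : T ^ 2 ≤ (1 + β) ^ 2 * S ^ 2 := by nlinarith
      have hcmp : (1 - τ - 15 * (Real.sqrt γ + β)) * ((1 + β) ^ 2 * S ^ 2)
          ≤ (1 - τ - (15/2) * Real.sqrt γ) * S ^ 2 := by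
        have hBS : (1 - τ - 15 * (Real.sqrt γ + β)) * (1 + β) ^ 2
            ≤ 1 - τ - (15/2) * Real.sqrt γ := by
          nlinarith [mul_nonneg hsg hβ0, mul_nonneg (mul_nonneg hsg hβ0) hβ0,
            mul_nonneg hβ0 hβ0, mul_nonneg (mul_nonneg hβ0 hβ0) hβ0,
            mul_nonneg hτ0 hβ0, mul_nonneg hτ0 (mul_nonneg hβ0 hβ0)]
        nlinarith [sq_nonneg S]
      have := mul_le_mul_of_nonneg_left hT2 (le_of_lt hB)
      linarith
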